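/- Let X be a Banach space whose numerical index equals 1. If X has the Bishop–Phelps–Bollobás property for the numerical radius (BPBp-nu), then X has property (nu). -/

import Mathlib

/-- The numerical radius of a bounded linear operator on a normed space. -/
noncomputable def numRadius {𝕂 : Type*} [RCLike 𝕂] {Z : Type*} [NormedAddCommGroup Z]
    [NormedSpace 𝕂 Z] (T : Z →L[𝕂] Z) : ℝ :=
  sSup { r : ℝ | ∃ (z : Z) (f : Z →L[𝕂] 𝕂), ‖z‖ = 1 ∧ ‖f‖ = 1 ∧ f z = 1 ∧ r = ‖f (T z)‖ }

/-- The numerical index of a normed space. -/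
noncomputable def numIndex (𝕂 : Type*) [RCLike 𝕂] (Z : Type*) [NormedAddCommGroup Z]
    [NormedSpace 𝕂 Z] : ℝ :=
  sInf { r : ℝ | ∃ T : Z →L[𝕂] Z, ‖T‖ = 1 ∧ r = numRadius T }

/-- Property (nu) for a normed space. -/
def PropertyNu (𝕂 : Type*) [RCLike 𝕂] (X : Type*) [NormedAddCommGroup X]
    [NormedSpace 𝕂 X] : Prop :=
  ∀ ε : ℝ, 0 < ε → ∃ η : ℝ, 0 < η ∧
    ∀ (T : X →L[𝕂] X) (x₀ : X) (f₀ : X →L[𝕂] 𝕂),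
      ‖T‖ = 1 → ‖x₀‖ = 1 → ‖f₀‖ = 1 → 1 - η < RCLike.re (f₀ x₀) → ‖f₀ (T x₀)‖ = 1 →
      ∃ (S : X →L[𝕂] X) (x₁ : X) (f₁ : X →L[𝕂] 𝕂),
        ‖S‖ = 1 ∧ ‖x₁‖ = 1 ∧ ‖f₁‖ = 1 ∧ ‖f₁ (S x₁)‖ = 1 ∧ f₁ x₁ = 1 ∧
        ‖x₁ - x₀‖ < ε ∧ ‖f₁ - f₀‖ < ε ∧ ‖S - T‖ < ε

/-- The Bishop–Phelps–Bollobás property for the numerical radius (BPBp-nu). -/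
def BPBpNu (𝕂 : Type*) [RCLike 𝕂] (Z : Type*) [NormedAddCommGroup Z]
    [NormedSpace 𝕂 Z] : Prop :=
  ∀ ε : ℝ, 0 < ε → ε < 1 → ∃ η : ℝ, 0 < η ∧
    ∀ (T : Z →L[𝕂] Z) (z₀ : Z) (f₀ : Z →L[𝕂] 𝕂),
      numRadius T = 1 → ‖z₀‖ = 1 → ‖f₀‖ = 1 → f₀ z₀ = 1 → 1 - η < ‖f₀ (T z₀)‖ →
      ∃ (S : Z →L[𝕂] Z) (z₁ : Z) (f₁ : Z →L[𝕂] 𝕂),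
        ‖z₁‖ = 1 ∧ ‖f₁‖ = 1 ∧ f₁ z₁ = 1 ∧ numRadius S = 1 ∧ ‖f₁ (S z₁)‖ = 1 ∧
        ‖S - T‖ < ε ∧ ‖z₁ - z₀‖ < ε ∧ ‖f₁ - f₀‖ < ε


set_option maxHeartbeats 1000000

open Metric Filter Topology RCLike


lemma my_ekeland {X : Type*} [NormedAddCommGroup X] [CompleteSpace X]
    {C : Set X} (hC : IsClosed C) (φ : X → ℝ) (hφ : Continuous φ)
    (hφ0 : ∀ x ∈ C, 0 ≤ φ x) {x₀ : X} (hx₀ : x₀ ∈ C) {lam : ℝ} (hlam : 0 < lam) :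
    ∃ y ∈ C, φ y + lam * ‖y - x₀‖ ≤ φ x₀ ∧ ∀ x ∈ C, φ y ≤ φ x + lam * ‖x - y‖ := by
  classical
  set S : X → Set X := fun z => {x | x ∈ C ∧ φ x + lam * ‖x - z‖ ≤ φ z} with hS
  have hSsub : ∀ z, S z ⊆ C := fun z x hx => hx.1
  have hSself : ∀ z ∈ C, z ∈ S z := fun z hz => ⟨hz, by simp⟩
  have hStrans : ∀ z w, w ∈ S z → S w ⊆ S z := by
    rintro z w ⟨hwC, hw⟩ x ⟨hxC, hx⟩
    refine ⟨hxC, ?_⟩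
    have h3 : ‖x - z‖ ≤ ‖x - w‖ + ‖w - z‖ := by
      simpa [sub_add_sub_cancel] using norm_add_le (x - w) (w - z)
    nlinarith [hlam.le]
  have hSclosed : ∀ z, IsClosed (S z) := by
    intro z
    have : S z = C ∩ {x | φ x + lam * ‖x - z‖ ≤ φ z} := rfl
    rw [this]
    exact hC.inter (isClosed_le (hφ.add (continuous_const.mul
      ((continuous_id.sub continuous_const).norm))) continuous_const)
  set m : X → ℝ := fun z => sInf (φ '' S z) with hm
  have hbdd : ∀ z, BddBelow (φ '' S z) := by
    intro z
    refine ⟨0, ?_⟩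
    rintro r ⟨x', hx', rfl⟩
    exact hφ0 x' (hSsub z hx')
  have hm_le : ∀ z, ∀ x ∈ S z, m z ≤ φ x := fun z x hx => csInf_le (hbdd z) ⟨x, hx, rfl⟩
  have key : ∀ z ∈ C, ∀ n : ℕ, ∃ w, w ∈ S z ∧ φ w < m z + (2⁻¹ : ℝ) ^ n := by
    intro z hz n
    have hne : (φ '' S z).Nonempty := ⟨φ z, z, hSself z hz, rfl⟩
    obtain ⟨r, ⟨w, hw, rfl⟩, hr⟩ := exists_lt_of_csInf_lt hne
      (lt_add_of_pos_right (m z) (show (0:ℝ) < 2⁻¹ ^ n by positivity))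
    exact ⟨w, hw, hr⟩
  set F : ℕ → {p : X // p ∈ C} := fun n => Nat.rec ⟨x₀, hx₀⟩
    (fun n p => ⟨(key p.1 p.2 (n+1)).choose, hSsub _ (key p.1 p.2 (n+1)).choose_spec.1⟩) n
    with hF
  have hF0 : (F 0).1 = x₀ := rfl
  have hFstep : ∀ n, (F (n+1)).1 ∈ S (F n).1 ∧ φ (F (n+1)).1 < m (F n).1 + (2⁻¹ : ℝ) ^ (n+1) :=
    fun n => (key (F n).1 (F n).2 (n+1)).choose_spec
  have hmono : ∀ n k, S ((F (n+k)).1) ⊆ S ((F n).1) := by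
    intro n k
    induction k with
    | zero => exact subset_rfl
    | succ k ih =>
      have h := hStrans ((F (n+k)).1) ((F (n+k+1)).1) (hFstep (n+k)).1
      exact h.trans ih
  have hmem : ∀ n k, (F (n+k)).1 ∈ S ((F n).1) := by
    intro n k
    cases k with
    | zero => exact hSself _ (F n).2
    | succ k => exact hmono n k (hFstep (n+k)).1
  have small : ∀ n, ∀ x ∈ S ((F (n+1)).1), lam * ‖x - (F (n+1)).1‖ ≤ (2⁻¹ : ℝ) ^ (n+1) := by
    intro n x hx
    have h1 : x ∈ S (F n).1 := hStrans _ _ (hFstep n).1 hx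
    have h2 : m (F n).1 ≤ φ x := hm_le _ _ h1
    have h3 : φ x + lam * ‖x - (F (n+1)).1‖ ≤ φ (F (n+1)).1 := hx.2
    have h4 := (hFstep n).2
    set p := (2⁻¹ : ℝ) ^ (n+1)
    set L := lam * ‖x - (F (n+1)).1‖
    set a := m ((F n).1)
    set b := φ x
    set c := φ ((F (n+1)).1)
    linarith
  have hdist : ∀ n, dist ((F n).1) ((F (n+1)).1) ≤ ((φ x₀ + 1)/lam) * (2⁻¹ : ℝ) ^ n := by
    intro n
    match n with
    | 0 =>
      have h1 : φ (F 1).1 + lam * ‖(F 1).1 - x₀‖ ≤ φ x₀ := by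
        have := (hFstep 0).1.2; rwa [hF0] at this
      have h2 : 0 ≤ φ (F 1).1 := hφ0 _ (F 1).2
      calc dist ((F 0).1) ((F (0+1)).1) = ‖(F 1).1 - x₀‖ := by rw [dist_eq_norm', hF0]; rfl
        _ ≤ (φ x₀ + 1)/lam := by rw [le_div_iff₀ hlam]; nlinarith
        _ = (φ x₀ + 1)/lam * (2⁻¹:ℝ)^0 := by norm_num
    | (k+1) =>
      have h1 := small k _ (hFstep (k+1)).1
      have h3 : (1:ℝ) ≤ φ x₀ + 1 := by have := hφ0 x₀ hx₀; linarith
      calc dist ((F (k+1)).1) ((F (k+1+1)).1) = ‖(F (k+2)).1 - (F (k+1)).1‖ := dist_eq_norm' _ _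
        _ ≤ (2⁻¹:ℝ)^(k+1) / lam := by rw [le_div_iff₀ hlam]; nlinarith
        _ = (1/lam) * (2⁻¹:ℝ)^(k+1) := by ring
        _ ≤ ((φ x₀+1)/lam) * (2⁻¹:ℝ)^(k+1) := by
            have h4 : 1/lam ≤ (φ x₀+1)/lam := by gcongr
            exact mul_le_mul_of_nonneg_right h4 (by positivity)
  have hcauchy : CauchySeq (fun n => (F n).1) :=
    cauchySeq_of_le_geometric (2⁻¹) ((φ x₀ + 1)/lam) (by norm_num) hdist
  obtain ⟨y, hy⟩ := cauchySeq_tendsto_of_complete hcauchy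
  have hyC : y ∈ C := hC.mem_of_tendsto hy (Eventually.of_forall fun n => (F n).2)
  have hyS : ∀ n, y ∈ S ((F n).1) := by
    intro n
    refine (hSclosed _).mem_of_tendsto hy ?_
    filter_upwards [eventually_ge_atTop n] with k hk
    obtain ⟨j, rfl⟩ := Nat.exists_eq_add_of_le hk
    exact hmem n j
  refine ⟨y, hyC, ?_, ?_⟩
  · have := (hyS 0).2; rwa [hF0] at this
  · intro x hxC
    by_contra hlt
    push_neg at hlt
    have hxSy : x ∈ S y := ⟨hxC, hlt.le⟩
    have h5 : ∀ n, m ((F n).1) ≤ φ x := fun n => hm_le _ _ (hStrans _ y (hyS n) hxSy)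
    have h6 : ∀ n, φ ((F (n+1)).1) - (2⁻¹:ℝ)^(n+1) ≤ φ x := by
      intro n
      have ha := (hFstep n).2
      have hb := h5 n
      linarith
    have h7 : Tendsto (fun n => φ ((F (n+1)).1) - (2⁻¹:ℝ)^(n+1)) atTop (𝓝 (φ y - 0)) := by
      refine Tendsto.sub ?_ ?_
      · exact (hφ.tendsto y).comp (hy.comp (tendsto_add_atTop_nat 1))
      · exact (tendsto_pow_atTop_nhds_zero_of_lt_one (by norm_num) (by norm_num)).comp
          (tendsto_add_atTop_nat 1)
    have h8 : φ y - 0 ≤ φ x := le_of_tendsto h7 (Eventually.of_forall h6)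
    have h9 : 0 ≤ lam * ‖x - y‖ := by positivity
    linarith

lemma my_bpb (𝕂 : Type*) [RCLike 𝕂] (X : Type*) [NormedAddCommGroup X]
    [NormedSpace 𝕂 X] [CompleteSpace X] {δ : ℝ} (hδ0 : 0 < δ) (hδ1 : δ < 1) :
    ∃ η : ℝ, 0 < η ∧ ∀ (x₀ : X) (f₀ : X →L[𝕂] 𝕂), ‖x₀‖ = 1 → ‖f₀‖ = 1 →
      1 - η < re (f₀ x₀) →
      ∃ (y : X) (g : X →L[𝕂] 𝕂), ‖y‖ = 1 ∧ ‖g‖ = 1 ∧ g y = 1 ∧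
        ‖y - x₀‖ ≤ δ ∧ ‖g - f₀‖ ≤ δ := by
  letI : Module ℝ X := RestrictScalars.module ℝ 𝕂 X
  letI : IsScalarTower ℝ 𝕂 X := RestrictScalars.isScalarTower ℝ 𝕂 X
  letI : NormedSpace ℝ X := NormedSpace.restrictScalars ℝ 𝕂 X
  set lam : ℝ := δ/4 with hlam_def
  set η : ℝ := min (δ*δ/4) (δ/8) with hη_def
  set ε₁ : ℝ := 2*lam + 4*η with hε₁_def
  have hlam0 : 0 < lam := by rw [hlam_def]; positivity
  have hlam4 : lam ≤ 1/4 := by rw [hlam_def]; linarith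
  have hη1 : η ≤ δ*δ/4 := min_le_left _ _
  have hη2 : η ≤ δ/8 := min_le_right _ _
  have hη0 : 0 < η := lt_min (by positivity) (by positivity)
  have hη8 : η ≤ 1/8 := by linarith
  have hε₁0 : 0 < ε₁ := by rw [hε₁_def]; positivity
  have hε₁δ : ε₁ ≤ δ := by rw [hε₁_def, hlam_def]; linarith
  clear_value ε₁ η lam
  refine ⟨η, hη0, ?_⟩
  intro x₀ f₀ hx₀ hf₀ hre
  set u : X →L[ℝ] ℝ := reCLM.comp (f₀.restrictScalars ℝ) with hu_def
  have hu : ∀ w : X, u w = re (f₀ w) := fun w => rfl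
  have hub : ∀ w : X, |u w| ≤ ‖w‖ := by
    intro w
    rw [hu]
    refine (abs_re_le_norm _).trans ?_
    calc ‖f₀ w‖ ≤ ‖f₀‖ * ‖w‖ := f₀.le_opNorm w
      _ = ‖w‖ := by rw [hf₀, one_mul]
  clear_value u
  have hx₀C : x₀ ∈ Metric.closedBall (0:X) 1 := by
    rw [mem_closedBall_zero_iff, hx₀]
  obtain ⟨y, hyC, hy1, hy2⟩ := my_ekeland (isClosed_closedBall) (fun x => 1 - u x)
    (continuous_const.sub u.continuous)
    (fun x hx => by
      have h1 : ‖x‖ ≤ 1 := mem_closedBall_zero_iff.mp hx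
      have h2 := (abs_le.mp (hub x)).2
      linarith) hx₀C hlam0
  have hyball : ‖y‖ ≤ 1 := mem_closedBall_zero_iff.mp hyC
  have hEk : ∀ x : X, ‖x‖ ≤ 1 → u x ≤ u y + lam * ‖x - y‖ := by
    intro x hx
    have := hy2 x (mem_closedBall_zero_iff.mpr hx)
    linarith
  have hux₀ : 1 - η < u x₀ := by rw [hu]; exact hre
  have hβ1 : u y ≤ 1 := (le_abs_self _).trans ((hub y).trans hyball)
  have hy1' : (1 - u y) + lam * ‖y - x₀‖ ≤ 1 - u x₀ := hy1
  have hnn : 0 ≤ lam * ‖y - x₀‖ := by positivity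
  have hβlb : 1 - η < u y := by linarith
  have hβpos : 0 < u y := by linarith
  have hdistyx : ‖y - x₀‖ ≤ δ := by
    have h1 : lam * ‖y - x₀‖ < η := by
      have h2 : 0 ≤ 1 - u y := by
        have := (le_abs_self _).trans (hub y); linarith [hyball]
      linarith
    have h3 : lam * ‖y - x₀‖ ≤ lam * δ := by
      have : lam * δ = δ * δ / 4 := by rw [hlam_def]; ring
      linarith
    exact le_of_mul_le_mul_left h3 hlam0
  have hny : ‖y‖ = 1 := by
    by_contra hne
    have hlt : ‖y‖ < 1 := lt_of_le_of_ne hyball hne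
    set r : ℝ := 1 - ‖y‖ with hr_def
    have hr0 : 0 < r := by linarith
    have hxb : ‖y + r • x₀‖ ≤ 1 := by
      calc ‖y + r • x₀‖ ≤ ‖y‖ + ‖r • x₀‖ := norm_add_le _ _
        _ = ‖y‖ + r := by rw [norm_smul, Real.norm_eq_abs, abs_of_pos hr0, hx₀, mul_one]
        _ = 1 := by rw [hr_def]; ring
    have h1 := hEk (y + r • x₀) hxb
    rw [map_add, map_smul, smul_eq_mul] at h1
    have h2 : y + r • x₀ - y = r • x₀ := by abel
    rw [h2, norm_smul, Real.norm_eq_abs, abs_of_pos hr0, hx₀, mul_one] at h1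
    have h3 : u x₀ ≤ lam := by
      have := (mul_le_mul_iff_right₀ hr0).mp (by linarith : r * u x₀ ≤ r * lam)
      linarith
    linarith
  -- Key inequality
  have K : ∀ (w : X) (t : ℝ), 0 ≤ t → u w - ε₁ * ‖w‖ ≤ ‖w + t • y‖ - t := by
    intro w t ht
    have hw1 : -‖w‖ ≤ u w := (abs_le.mp (hub w)).1
    have hw2 : u w ≤ ‖w‖ := (abs_le.mp (hub w)).2
    have stepA : u y * (u w - ε₁ * ‖w‖) ≤ u w - 2*lam*‖w‖ := by
      have h2 : 0 ≤ (1 - u y) * (u w + ‖w‖) := mul_nonneg (by linarith) (by linarith)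
      have key2 : u y * ε₁ - 2*lam ≥ 1 - u y := by
        have ha : (1-η) * ε₁ ≤ u y * ε₁ := mul_le_mul_of_nonneg_right hβlb.le hε₁0.le
        have hb : (1-η) * ε₁ - 2*lam ≥ η := by
          rw [hε₁_def]
          linarith [mul_nonneg hη0.le (show (0:ℝ) ≤ 3 - 2*lam - 4*η by linarith)]
        linarith
      have hint2 : 0 ≤ (u y * ε₁ - 2*lam - (1 - u y)) * ‖w‖ :=
        mul_nonneg (by linarith) (norm_nonneg w)
      linarith [h2, hint2]
    have stepB : u w - 2*lam*‖w‖ ≤ u y * (‖w + t • y‖ - t) := by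
      rcases eq_or_lt_of_le (norm_nonneg (w + t • y)) with h0 | hs
      · have hzero : w + t • y = 0 := norm_eq_zero.mp h0.symm
        have hw : w = -(t • y) := by
          have h1 := hzero; rwa [add_eq_zero_iff_eq_neg] at h1
        rw [hzero, norm_zero, hw, map_neg, map_smul, smul_eq_mul, norm_neg, norm_smul,
          Real.norm_eq_abs, abs_of_nonneg ht, hny, mul_one]
        linarith [mul_nonneg hlam0.le ht]
      · set x : X := ‖w + t • y‖⁻¹ • (w + t • y) with hx_def
        have hsne : ‖w + t • y‖ ≠ 0 := hs.ne'
        have hxn : ‖x‖ = 1 := by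
          rw [hx_def, norm_smul, Real.norm_eq_abs, abs_of_pos (inv_pos.mpr hs),
            inv_mul_cancel₀ hsne]
        have hEx := hEk x hxn.le
        have hux : u x = ‖w + t • y‖⁻¹ * (u w + t * u y) := by
          rw [hx_def, map_smul, smul_eq_mul, map_add, map_smul, smul_eq_mul]
        have hsx : ‖w + t • y‖ • x = w + t • y := by
          rw [hx_def, smul_smul, mul_inv_cancel₀ hsne, one_smul]
        have h5 : ‖w + t • y‖ • (x - y) = w + (t - ‖w + t • y‖) • y := by
          rw [smul_sub, hsx, sub_smul]; abel
        have hxy : ‖x - y‖ = ‖w + t • y‖⁻¹ * ‖w + (t - ‖w + t • y‖) • y‖ := by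
          have h6 : ‖w + t • y‖ * ‖x - y‖ = ‖w + (t - ‖w + t • y‖) • y‖ := by
            rw [← h5, norm_smul, Real.norm_eq_abs, abs_of_pos hs]
          rw [← h6, ← mul_assoc, inv_mul_cancel₀ hsne, one_mul]
        have hts : |t - ‖w + t • y‖| ≤ ‖w‖ := by
          have h7 := abs_norm_sub_norm_le (t • y) (w + t • y)
          have h8 : t • y - (w + t • y) = -w := by abel
          rw [h8, norm_neg, norm_smul, Real.norm_eq_abs, abs_of_nonneg ht, hny,
            mul_one] at h7
          exact h7
        have hxyb : ‖x - y‖ ≤ ‖w + t • y‖⁻¹ * (2 * ‖w‖) := by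
          rw [hxy]
          have h9 : ‖w + (t - ‖w + t • y‖) • y‖ ≤ ‖w‖ + |t - ‖w + t • y‖| := by
            calc ‖w + (t - ‖w + t • y‖) • y‖ ≤ ‖w‖ + ‖(t - ‖w + t • y‖) • y‖ :=
                  norm_add_le _ _
              _ = ‖w‖ + |t - ‖w + t • y‖| := by
                  rw [norm_smul, Real.norm_eq_abs, hny, mul_one]
          have h10 : ‖w + (t - ‖w + t • y‖) • y‖ ≤ 2 * ‖w‖ := by linarith
          exact mul_le_mul_of_nonneg_left h10 (by positivity)
        have h7 : ‖w + t • y‖⁻¹ * (u w + t * u y) ≤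
            u y + lam * (‖w + t • y‖⁻¹ * (2 * ‖w‖)) := by
          calc ‖w + t • y‖⁻¹ * (u w + t * u y) = u x := hux.symm
            _ ≤ u y + lam * ‖x - y‖ := hEx
            _ ≤ u y + lam * (‖w + t • y‖⁻¹ * (2 * ‖w‖)) :=
                add_le_add_right (mul_le_mul_of_nonneg_left hxyb hlam0.le) _
        have h8 : ‖w + t • y‖ * (‖w + t • y‖⁻¹ * (u w + t * u y)) = u w + t * u y := by
          rw [← mul_assoc, mul_inv_cancel₀ hsne, one_mul]
        have h9 : ‖w + t • y‖ * (u y + lam * (‖w + t • y‖⁻¹ * (2 * ‖w‖))) =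
            ‖w + t • y‖ * u y + 2 * lam * ‖w‖ := by
          field_simp
        have h10 := mul_le_mul_of_nonneg_left h7 hs.le
        rw [h8, h9] at h10
        have h11 : u y * (‖w + t • y‖ - t) = ‖w + t • y‖ * u y - t * u y := by ring
        linarith [h10, h11]
    have := stepA.trans stepB
    exact le_of_mul_le_mul_left this hβpos
  -- The sublinear functional q
  set A : X → Set ℝ := fun x =>
    {r | ∃ w : X, ∃ t : ℝ, 0 ≤ t ∧ r = ‖w + t • y‖ - t + u (x - w) + ε₁ * ‖x - w‖} with hA_def
  have hmemA : ∀ (x w : X) (t : ℝ), 0 ≤ t →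
      (‖w + t • y‖ - t + u (x - w) + ε₁ * ‖x - w‖) ∈ A x := fun x w t ht => ⟨w, t, ht, rfl⟩
  have hlow : ∀ x, ∀ r ∈ A x, u x - ε₁ * ‖x‖ ≤ r := by
    rintro x r ⟨w, t, ht, rfl⟩
    have hK := K w t ht
    have htri : ‖w‖ ≤ ‖x - w‖ + ‖x‖ := by
      have h1 := norm_sub_le x (x - w)
      have h2 : x - (x - w) = w := by abel
      rw [h2] at h1
      linarith
    have hmap : u (x - w) = u x - u w := map_sub u x w
    have hint : 0 ≤ ε₁ * (‖x - w‖ + ‖x‖ - ‖w‖) := mul_nonneg hε₁0.le (by linarith)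
    linarith [hK, hint, hmap]
  have hbddA : ∀ x, BddBelow (A x) := fun x => ⟨u x - ε₁*‖x‖, fun r hr => hlow x r hr⟩
  have hneA : ∀ x, (A x).Nonempty := fun x => ⟨_, hmemA x x 0 le_rfl⟩
  set q : X → ℝ := fun x => sInf (A x) with hq_def
  have hq_le : ∀ (x w : X) (t : ℝ), 0 ≤ t →
      q x ≤ ‖w + t • y‖ - t + u (x - w) + ε₁ * ‖x - w‖ :=
    fun x w t ht => csInf_le (hbddA x) (hmemA x w t ht)
  have hq_norm : ∀ x, q x ≤ ‖x‖ := by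
    intro x
    have := hq_le x x 0 le_rfl
    simpa using this
  have hq_u : ∀ x, q x ≤ u x + ε₁ * ‖x‖ := by
    intro x
    have := hq_le x 0 0 le_rfl
    simpa using this
  have hq_ge : ∀ x, u x - ε₁*‖x‖ ≤ q x := fun x => le_csInf (hneA x) (hlow x)
  have hq_negy : q (-y) ≤ -1 := by
    have := hq_le (-y) (-y) 1 zero_le_one
    simpa using this
  have N_hom : ∀ c : ℝ, 0 < c → ∀ x, q (c • x) = c * q x := by
    have hscale : ∀ c : ℝ, 0 < c → ∀ x, q (c • x) ≤ c * q x := by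
      intro c hc x
      have h1 : ∀ r ∈ A x, q (c • x) ≤ c * r := by
        rintro r ⟨w, t, ht, rfl⟩
        have h2 := hq_le (c • x) (c • w) (c * t) (mul_nonneg hc.le ht)
        refine h2.trans_eq ?_
        have e1 : c • w + (c * t) • y = c • (w + t • y) := by
          rw [smul_add, mul_smul]
        have e2 : c • x - c • w = c • (x - w) := by rw [smul_sub]
        rw [e1, e2, norm_smul, norm_smul, map_smul, smul_eq_mul, Real.norm_eq_abs,
          abs_of_pos hc]
        ring
      have h2 : c⁻¹ * q (c • x) ≤ q x := le_csInf (hneA x) (fun r hr => by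
        have h3 := h1 r hr
        rw [inv_mul_le_iff₀ hc]
        exact h3)
      calc q (c • x) = c * (c⁻¹ * q (c • x)) := by field_simp
        _ ≤ c * q x := mul_le_mul_of_nonneg_left h2 hc.le
    intro c hc x
    refine le_antisymm (hscale c hc x) ?_
    have h4 := hscale c⁻¹ (inv_pos.mpr hc) (c • x)
    rw [inv_smul_smul₀ hc.ne'] at h4
    calc c * q x ≤ c * (c⁻¹ * q (c • x)) := mul_le_mul_of_nonneg_left h4 hc.le
      _ = q (c • x) := by field_simp
  have N_add : ∀ x₁ x₂ : X, q (x₁ + x₂) ≤ q x₁ + q x₂ := by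
    intro x₁ x₂
    have h1 : ∀ r₁ ∈ A x₁, ∀ r₂ ∈ A x₂, q (x₁ + x₂) ≤ r₁ + r₂ := by
      rintro r₁ ⟨w₁, t₁, ht₁, rfl⟩ r₂ ⟨w₂, t₂, ht₂, rfl⟩
      have h := hq_le (x₁+x₂) (w₁+w₂) (t₁+t₂) (add_nonneg ht₁ ht₂)
      refine h.trans ?_
      have e1 : w₁ + w₂ + (t₁+t₂) • y = (w₁ + t₁ • y) + (w₂ + t₂ • y) := by
        rw [add_smul]; abel
      have n1 : ‖w₁+w₂+(t₁+t₂) • y‖ ≤ ‖w₁+t₁ • y‖ + ‖w₂+t₂ • y‖ := by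
        rw [e1]; exact norm_add_le _ _
      have e2 : x₁ + x₂ - (w₁ + w₂) = (x₁ - w₁) + (x₂ - w₂) := by abel
      have n2 : ‖x₁+x₂-(w₁+w₂)‖ ≤ ‖x₁-w₁‖ + ‖x₂-w₂‖ := by
        rw [e2]; exact norm_add_le _ _
      have m2 : u (x₁+x₂-(w₁+w₂)) = u (x₁-w₁) + u (x₂-w₂) := by rw [e2, map_add]
      have n3 := mul_le_mul_of_nonneg_left n2 hε₁0.le
      linarith [n1, m2, n3]
    have h5 : ∀ r₁ ∈ A x₁, q (x₁+x₂) - q x₂ ≤ r₁ := by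
      intro r₁ hr₁
      have h6 : ∀ r₂ ∈ A x₂, q (x₁+x₂) - r₁ ≤ r₂ := fun r₂ hr₂ => by
        linarith [h1 r₁ hr₁ r₂ hr₂]
      have h7 : q (x₁+x₂) - r₁ ≤ q x₂ := le_csInf (hneA x₂) h6
      linarith
    have h8 : q (x₁+x₂) - q x₂ ≤ q x₁ := le_csInf (hneA x₁) h5
    linarith
  -- Hahn-Banach
  obtain ⟨v₀, -, hv₀⟩ := exists_extension_of_le_sublinear
    ((0 : X →ₗ[ℝ] ℝ).toPMap ⊥) q N_hom N_add
    (by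
      rintro ⟨x, hx⟩
      change (0 : X →ₗ[ℝ] ℝ) x ≤ q x
      simp only [LinearMap.zero_apply]
      have hx0 : x = 0 := by simpa using hx
      rw [hx0]
      have := hq_ge 0
      simpa using this)
  have hv₀b : ∀ x : X, ‖v₀ x‖ ≤ 1 * ‖x‖ := by
    intro x
    rw [one_mul, Real.norm_eq_abs, abs_le]
    constructor
    · have h1 := (hv₀ (-x)).trans (hq_norm (-x))
      rw [map_neg, norm_neg] at h1
      linarith
    · exact (hv₀ x).trans (hq_norm x)
  set v : X →L[ℝ] ℝ := LinearMap.mkContinuous v₀ 1 hv₀b with hv_def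
  have hv_apply : ∀ x, v x = v₀ x := fun x => rfl
  have hvnorm : ‖v‖ ≤ 1 := LinearMap.mkContinuous_norm_le v₀ zero_le_one hv₀b
  have hvy : v y = 1 := by
    rw [hv_apply]
    have hge : 1 ≤ v₀ y := by
      have h1 := (hv₀ (-y)).trans hq_negy
      rw [map_neg] at h1
      linarith
    have hle : v₀ y ≤ 1 := (hv₀ y).trans ((hq_norm y).trans_eq hny)
    linarith
  have hvu : ∀ x, |v x - u x| ≤ ε₁ * ‖x‖ := by
    intro x
    rw [abs_le]
    constructor
    · have h1 := (hv₀ (-x)).trans (hq_u (-x))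
      rw [map_neg, map_neg, norm_neg] at h1
      rw [hv_apply]
      linarith
    · have h2 := (hv₀ x).trans (hq_u x)
      rw [hv_apply]
      linarith
  clear_value v
  -- Extend to 𝕂
  set g : X →L[𝕂] 𝕂 := StrongDual.extendRCLike v with hg_def
  have hgnorm' : ‖g‖ = ‖v‖ := ContinuousLinearMap.norm_extendTo𝕜' v
  have happly : ∀ x : X, g x = (v x : 𝕂) - (I : 𝕂) * (v ((I:𝕂) • x) : 𝕂) :=
    fun x => ContinuousLinearMap.extendTo𝕜'_apply v x
  have hf₀ext : ∀ x : X, f₀ x = (u x : 𝕂) - (I:𝕂) * (u ((I:𝕂) • x) : 𝕂) := by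
    intro x
    rw [hu, hu]
    have hsm : f₀ ((I:𝕂) • x) = (I:𝕂) * f₀ x := by rw [map_smul, smul_eq_mul]
    rw [hsm, I_mul_re]
    push_cast
    conv_lhs => rw [← re_add_im (f₀ x)]
    ring
  have hgf : g - f₀ = StrongDual.extendRCLike (v - u) := by
    ext x
    rw [ContinuousLinearMap.extendTo𝕜'_apply]
    simp only [ContinuousLinearMap.sub_apply]
    rw [happly x, hf₀ext x]
    push_cast
    ring
  have hgfn : ‖g - f₀‖ ≤ ε₁ := by
    rw [hgf, ContinuousLinearMap.norm_extendTo𝕜']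
    refine ContinuousLinearMap.opNorm_le_bound _ hε₁0.le fun x => ?_
    have := hvu x
    simpa [Real.norm_eq_abs, ContinuousLinearMap.sub_apply] using this
  clear_value g
  have hgy : g y = 1 := by
    have h1 : ‖g y‖ ≤ 1 := by
      calc ‖g y‖ ≤ ‖g‖ * ‖y‖ := g.le_opNorm y
        _ = ‖g‖ := by rw [hny, mul_one]
        _ = ‖v‖ := hgnorm'
        _ ≤ 1 := hvnorm
    have h2 : re (g y) = 1 := by
      rw [happly]
      rw [map_sub, I_mul_re]
      simp [hvy]
    have h3 : im (g y) = 0 := by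
      have h4 : ‖g y‖ ^ 2 = re (g y) * re (g y) + im (g y) * im (g y) := norm_sq_eq_def
      have h5 : ‖g y‖ ^ 2 ≤ 1 := pow_le_one₀ (norm_nonneg _) h1
      have h6 : im (g y) * im (g y) ≤ 0 := by rw [h2] at h4; linarith [h4, h5]
      exact mul_self_eq_zero.mp (le_antisymm h6 (mul_self_nonneg _))
    have := re_add_im (g y)
    rw [h2, h3] at this
    simp at this
    exact this.symm
  have hgnorm : ‖g‖ = 1 := by
    refine le_antisymm (hgnorm' ▸ hvnorm) ?_
    have h1 : (1:ℝ) = ‖g y‖ := by rw [hgy, norm_one]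
    calc (1:ℝ) = ‖g y‖ := h1
      _ ≤ ‖g‖ * ‖y‖ := g.le_opNorm y
      _ = ‖g‖ := by rw [hny, mul_one]
  exact ⟨y, g, hny, hgnorm, hgy, hdistyx, hgfn.trans hε₁δ⟩

section NumRadius

variable {𝕂 : Type*} [RCLike 𝕂] {X : Type*} [NormedAddCommGroup X] [NormedSpace 𝕂 X]

lemma pair_exists {z : X} (hz : ‖z‖ = 1) : ∃ f : X →L[𝕂] 𝕂, ‖f‖ = 1 ∧ f z = 1 := by
  have hz0 : z ≠ 0 := by intro h; rw [h, norm_zero] at hz; norm_num at hz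
  obtain ⟨f, hf1, hf2⟩ := exists_dual_vector 𝕂 z (norm_ne_zero_iff.mpr hz0)
  refine ⟨f, hf1, ?_⟩
  rw [hf2, hz]
  norm_num

lemma numRadius_bddAbove (T : X →L[𝕂] X) :
    BddAbove { r : ℝ | ∃ (z : X) (f : X →L[𝕂] 𝕂), ‖z‖ = 1 ∧ ‖f‖ = 1 ∧ f z = 1 ∧
      r = ‖f (T z)‖ } := by
  refine ⟨‖T‖, ?_⟩
  rintro r ⟨z, f, hz, hf, hfz, rfl⟩
  calc ‖f (T z)‖ ≤ ‖f‖ * ‖T z‖ := f.le_opNorm _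
    _ ≤ 1 * (‖T‖ * ‖z‖) := by
        rw [hf, one_mul, one_mul]; exact T.le_opNorm z
    _ = ‖T‖ := by rw [hz, one_mul, mul_one]

lemma le_numRadius (T : X →L[𝕂] X) {z : X} {f : X →L[𝕂] 𝕂}
    (hz : ‖z‖ = 1) (hf : ‖f‖ = 1) (hfz : f z = 1) : ‖f (T z)‖ ≤ numRadius T :=
  le_csSup (numRadius_bddAbove T) ⟨z, f, hz, hf, hfz, rfl⟩

lemma numRadius_nonneg (hnt : ∃ z : X, ‖z‖ = 1) (T : X →L[𝕂] X) : 0 ≤ numRadius T := by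
  obtain ⟨z, hz⟩ := hnt
  obtain ⟨f, hf, hfz⟩ := pair_exists (𝕂 := 𝕂) hz
  exact (norm_nonneg _).trans (le_numRadius T hz hf hfz)

lemma numRadius_le_norm (hnt : ∃ z : X, ‖z‖ = 1) (T : X →L[𝕂] X) : numRadius T ≤ ‖T‖ := by
  obtain ⟨z, hz⟩ := hnt
  obtain ⟨f, hf, hfz⟩ := pair_exists (𝕂 := 𝕂) hz
  refine csSup_le ⟨‖f (T z)‖, z, f, hz, hf, hfz, rfl⟩ ?_
  rintro r ⟨z', f', hz', hf', hfz', rfl⟩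
  calc ‖f' (T z')‖ ≤ ‖f'‖ * ‖T z'‖ := f'.le_opNorm _
    _ ≤ 1 * (‖T‖ * ‖z'‖) := by rw [hf', one_mul, one_mul]; exact T.le_opNorm z'
    _ = ‖T‖ := by rw [hz', one_mul, mul_one]

lemma numRadius_smul_le (hnt : ∃ z : X, ‖z‖ = 1) (c : 𝕂) (T : X →L[𝕂] X) :
    numRadius (c • T) ≤ ‖c‖ * numRadius T := by
  obtain ⟨z0, hz0⟩ := hnt
  obtain ⟨f0, hf0, hf0z⟩ := pair_exists (𝕂 := 𝕂) hz0
  refine csSup_le ⟨‖f0 ((c • T) z0)‖, z0, f0, hz0, hf0, hf0z, rfl⟩ ?_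
  rintro r ⟨z, f, hz, hf, hfz, rfl⟩
  have h1 : f ((c • T) z) = c * f (T z) := by
    rw [ContinuousLinearMap.smul_apply, map_smul, smul_eq_mul]
  rw [h1, norm_mul]
  exact mul_le_mul_of_nonneg_left (le_numRadius T hz hf hfz) (norm_nonneg c)

lemma norm_le_numRadius (hX : numIndex 𝕂 X = 1) (hnt : ∃ z : X, ‖z‖ = 1)
    (S : X →L[𝕂] X) : ‖S‖ ≤ numRadius S := by
  by_cases hS : S = 0
  · rw [hS, norm_zero]
    exact numRadius_nonneg hnt 0
  · have hSn : 0 < ‖S‖ := norm_pos_iff.mpr hS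
    set c : 𝕂 := ((‖S‖⁻¹ : ℝ) : 𝕂) with hc_def
    have hcn : ‖c‖ = ‖S‖⁻¹ := by
      rw [hc_def, RCLike.norm_ofReal, abs_of_pos (inv_pos.mpr hSn)]
    have hT1 : ‖c • S‖ = 1 := by
      have h0 : ‖c • S‖ = ‖c‖ * ‖S‖ := norm_smul c S
      rw [h0, hcn, inv_mul_cancel₀ hSn.ne']
    have hbddI : BddBelow {r : ℝ | ∃ T : X →L[𝕂] X, ‖T‖ = 1 ∧ r = numRadius T} := by
      refine ⟨0, ?_⟩
      rintro r ⟨T, -, rfl⟩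
      exact numRadius_nonneg hnt T
    have h1 : (1:ℝ) ≤ numRadius (c • S) := by
      have h2 : numIndex 𝕂 X ≤ numRadius (c • S) := csInf_le hbddI ⟨c • S, hT1, rfl⟩
      rw [hX] at h2
      exact h2
    have h2 := numRadius_smul_le hnt c S
    rw [hcn] at h2
    have h3 : (1:ℝ) ≤ ‖S‖⁻¹ * numRadius S := h1.trans h2
    have h4 := mul_le_mul_of_nonneg_left h3 hSn.le
    rw [mul_one, ← mul_assoc, mul_inv_cancel₀ hSn.ne', one_mul] at h4
    exact h4

end NumRadius

/-- If `n(X) = 1` and `X` has the BPBp-nu, then `X` has property (nu). -/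
theorem propertyNu_of_bpbpnu (𝕂 : Type*) [RCLike 𝕂] (X : Type*)
    [NormedAddCommGroup X] [NormedSpace 𝕂 X] [CompleteSpace X]
    (hX : numIndex 𝕂 X = 1) (h : BPBpNu 𝕂 X) : PropertyNu 𝕂 X := by
  intro ε hε
  set ε' : ℝ := min ε 1 / 2 with hε'_def
  have hmin0 : 0 < min ε 1 := lt_min hε one_pos
  have hε'0 : 0 < ε' := by rw [hε'_def]; linarith
  have hε'1 : ε' < 1 := by
    have := min_le_right ε 1
    rw [hε'_def]; linarith
  have hε'ε : ε' ≤ ε/2 := by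
    have := min_le_left ε 1
    rw [hε'_def]; linarith
  obtain ⟨η', hη'0, hbp⟩ := h ε' hε'0 hε'1
  set δ : ℝ := min (min (ε/4) (η'/4)) (1/2) with hδ_def
  have hδ0 : 0 < δ := lt_min (lt_min (by positivity) (by positivity)) (by norm_num)
  have hδ1 : δ < 1 := lt_of_le_of_lt (min_le_right _ _) (by norm_num)
  have hδε : δ ≤ ε/4 := (min_le_left _ _).trans (min_le_left _ _)
  have hδη : δ ≤ η'/4 := (min_le_left _ _).trans (min_le_right _ _)
  obtain ⟨η, hη0, hbpb⟩ := my_bpb 𝕂 X hδ0 hδ1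
  refine ⟨η, hη0, ?_⟩
  intro T x₀ f₀ hT hx₀ hf₀ hre hTx₀
  have hnt : ∃ z : X, ‖z‖ = 1 := ⟨x₀, hx₀⟩
  obtain ⟨z, g, hz1, hg1, hgz, hzx, hgf⟩ := hbpb x₀ f₀ hx₀ hf₀ hre
  have hν : numRadius T = 1 := by
    refine le_antisymm ?_ ?_
    · rw [← hT]; exact numRadius_le_norm hnt T
    · rw [← hT]; exact norm_le_numRadius hX hnt T
  have hest : 1 - η' < ‖g (T z)‖ := by
    have hTz : ‖T z‖ ≤ 1 := by
      calc ‖T z‖ ≤ ‖T‖ * ‖z‖ := T.le_opNorm z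
        _ = 1 := by rw [hT, hz1, one_mul]
    have h2 : ‖(g - f₀) (T z)‖ ≤ δ := by
      calc ‖(g - f₀) (T z)‖ ≤ ‖g - f₀‖ * ‖T z‖ := (g - f₀).le_opNorm _
        _ ≤ δ * 1 := mul_le_mul hgf hTz (norm_nonneg _) hδ0.le
        _ = δ := mul_one δ
    have h3 : ‖f₀ (T z - T x₀)‖ ≤ δ := by
      calc ‖f₀ (T z - T x₀)‖ ≤ ‖f₀‖ * ‖T z - T x₀‖ := f₀.le_opNorm _
        _ = ‖T (z - x₀)‖ := by rw [hf₀, one_mul, map_sub]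
        _ ≤ ‖T‖ * ‖z - x₀‖ := T.le_opNorm _
        _ ≤ 1 * δ := by rw [hT, one_mul]; simpa using hzx
        _ = δ := one_mul δ
    have e0 : g (T z) - f₀ (T x₀) = (g - f₀) (T z) + f₀ (T z - T x₀) := by
      rw [map_sub, ContinuousLinearMap.sub_apply]; ring
    have e1 : ‖g (T z) - f₀ (T x₀)‖ ≤ 2*δ := by
      rw [e0]
      calc ‖(g - f₀) (T z) + f₀ (T z - T x₀)‖ ≤ ‖(g - f₀) (T z)‖ + ‖f₀ (T z - T x₀)‖ :=
            norm_add_le _ _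
        _ ≤ 2*δ := by linarith
    have e2 : ‖f₀ (T x₀)‖ - ‖g (T z)‖ ≤ 2*δ := by
      have := norm_sub_norm_le (f₀ (T x₀)) (g (T z))
      rw [norm_sub_rev] at e1
      linarith
    rw [hTx₀] at e2
    linarith
  obtain ⟨S, z₁, f₁, hz₁, hf₁, hf₁z₁, hνS, hSz₁, hST, hzz, hff⟩ :=
    hbp T z g hν hz1 hg1 hgz hest
  have hSnorm : ‖S‖ = 1 := by
    refine le_antisymm ?_ ?_
    · have h5 := norm_le_numRadius hX hnt S
      rw [hνS] at h5
      exact h5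
    · calc (1:ℝ) = ‖f₁ (S z₁)‖ := hSz₁.symm
        _ ≤ ‖f₁‖ * ‖S z₁‖ := f₁.le_opNorm _
        _ = ‖S z₁‖ := by rw [hf₁, one_mul]
        _ ≤ ‖S‖ * ‖z₁‖ := S.le_opNorm _
        _ = ‖S‖ := by rw [hz₁, mul_one]
  refine ⟨S, z₁, f₁, hSnorm, hz₁, hf₁, hSz₁, hf₁z₁, ?_, ?_, ?_⟩
  · have htri : ‖z₁ - x₀‖ ≤ ‖z₁ - z‖ + ‖z - x₀‖ := by
      have h9 := norm_add_le (z₁ - z) (z - x₀)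
      rwa [sub_add_sub_cancel] at h9
    have h10 : ‖z₁ - z‖ + ‖z - x₀‖ < ε' + δ := add_lt_add_of_lt_of_le hzz hzx
    linarith
  · have htri : ‖f₁ - f₀‖ ≤ ‖f₁ - g‖ + ‖g - f₀‖ := by
      have h9 := norm_add_le (f₁ - g) (g - f₀)
      rwa [sub_add_sub_cancel] at h9
    have h10 : ‖f₁ - g‖ + ‖g - f₀‖ < ε' + δ := add_lt_add_of_lt_of_le hff hgf
    linarith
  · have h10 : ‖S - T‖ < ε' := hST
    linarith
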